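/- Let s(m) = [m^{γ₁}] with 0 < γ₁ < 1, where [·] denotes rounding. Using the bounds m − (a_s/2^{1/3})m^{1/3} < j_{m,s} < m − (a_s/2^{1/3})m^{1/3} + (3/20)a_s²·2^{1/3}/m^{1/3}, where a_s = −((3π/8)(4s−1))^{2/3}(1+σ_s) with 0 ≤ σ_s ≤ 0.130((3π/8)(4s−1.051))^{−2}, one has the asymptotic j_{m,s(m)} = m(1 + C₀ m^{2(γ₁−1)/3} + o(m^{2(γ₁−1)/3})) as m → ∞, for some positive constant C₀. -/

import Mathlib

open Filter Asymptotics Topology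

set_option maxHeartbeats 1000000 in
/-- Let `s(m) = [m^γ₁]` with `0 < γ₁ < 1`.  Using the sharp bounds
`m − (a_s/2^{1/3})m^{1/3} < j_{m,s} < m − (a_s/2^{1/3})m^{1/3} + (3/20)a_s²·2^{1/3}/m^{1/3}`,
where `a_s = −((3π/8)(4s−1))^{2/3}(1+σ_s)` with `0 ≤ σ_s ≤ 0.130((3π/8)(4s−1.051))^{−2}`,
one has `j_{m,s(m)} = m(1 + C₀ m^{2(γ₁−1)/3} + o(m^{2(γ₁−1)/3}))` as `m → ∞`,
for some constant `C₀ > 0`. -/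
theorem stmt6 (j : ℕ → ℕ → ℝ) (a σ' : ℕ → ℝ) (γ₁ : ℝ) (hγ0 : 0 < γ₁) (hγ1 : γ₁ < 1)
    (ha : ∀ s : ℕ, 1 ≤ s →
      a s = -((3 * Real.pi / 8) * (4 * (s : ℝ) - 1)) ^ ((2 : ℝ) / 3) * (1 + σ' s))
    (hσ0 : ∀ s : ℕ, 1 ≤ s → 0 ≤ σ' s)
    (hσ1 : ∀ s : ℕ, 1 ≤ s →
      σ' s ≤ 0.130 * (((3 * Real.pi / 8) * (4 * (s : ℝ) - 1.051)) ^ 2)⁻¹)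
    (hlow : ∀ m s : ℕ, 1 ≤ m → 1 ≤ s →
      (m : ℝ) - a s / 2 ^ ((1 : ℝ) / 3) * (m : ℝ) ^ ((1 : ℝ) / 3) < j m s)
    (hup : ∀ m s : ℕ, 1 ≤ m → 1 ≤ s →
      j m s < (m : ℝ) - a s / 2 ^ ((1 : ℝ) / 3) * (m : ℝ) ^ ((1 : ℝ) / 3) +
        (3 / 20) * (a s) ^ 2 * 2 ^ ((1 : ℝ) / 3) / (m : ℝ) ^ ((1 : ℝ) / 3)) :
    ∃ C₀ > (0 : ℝ), ∃ e : ℕ → ℝ,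
      (e =o[atTop] fun m : ℕ => (m : ℝ) ^ (2 * (γ₁ - 1) / 3)) ∧
      ∀ᶠ m : ℕ in atTop,
        j m ⌊(m : ℝ) ^ γ₁⌋₊ =
          (m : ℝ) * (1 + C₀ * (m : ℝ) ^ (2 * (γ₁ - 1) / 3) + e m) := by
  have hπ : (0:ℝ) < Real.pi := Real.pi_pos
  set α : ℝ := 2 * (γ₁ - 1) / 3 with hα
  set C₀ : ℝ := (3 * Real.pi / 2) ^ ((2:ℝ)/3) / 2 ^ ((1:ℝ)/3) with hC₀
  have hC₀pos : 0 < C₀ :=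
    div_pos (Real.rpow_pos_of_pos (by positivity) _) (Real.rpow_pos_of_pos two_pos _)
  set s : ℕ → ℕ := fun m => ⌊(m:ℝ) ^ γ₁⌋₊ with hsdef
  set e : ℕ → ℝ := fun m => j m (s m) / m - 1 - C₀ * (m:ℝ) ^ α with hedef
  -- basic tendsto facts
  have hx : Tendsto (fun m : ℕ => (m:ℝ) ^ γ₁) atTop atTop :=
    (tendsto_rpow_atTop hγ0).comp tendsto_natCast_atTop_atTop
  have hsN : Tendsto s atTop atTop := tendsto_nat_floor_atTop.comp hx
  have hsT : Tendsto (fun m => (s m : ℝ)) atTop atTop :=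
    tendsto_natCast_atTop_atTop.comp hsN
  have hq : Tendsto (fun m => (s m : ℝ) / (m:ℝ) ^ γ₁) atTop (𝓝 1) :=
    tendsto_nat_floor_div_atTop.comp hx
  have hinv : Tendsto (fun m : ℕ => ((m:ℝ) ^ γ₁)⁻¹) atTop (𝓝 0) := by
    exact hx.inv_tendsto_atTop
  have hr : Tendsto (fun m => (4 * (s m : ℝ) - 1) / (m:ℝ) ^ γ₁) atTop (𝓝 4) := by
    have h1 : Tendsto (fun m => 4 * ((s m : ℝ) / (m:ℝ) ^ γ₁) - ((m:ℝ) ^ γ₁)⁻¹)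
        atTop (𝓝 (4 * 1 - 0)) := (tendsto_const_nhds.mul hq).sub hinv
    have h2 : (fun m : ℕ => 4 * ((s m : ℝ) / (m:ℝ) ^ γ₁) - ((m:ℝ) ^ γ₁)⁻¹)
        = fun m => (4 * (s m : ℝ) - 1) / (m:ℝ) ^ γ₁ := by
      funext m; field_simp
    rw [h2] at h1; norm_num at h1; exact h1
  have hσlim : Tendsto (fun m => σ' (s m)) atTop (𝓝 0) := by
    have hb : Tendsto (fun m => (3 * Real.pi / 8) * (4 * (s m : ℝ) - 1.051)) atTop atTop := by
      refine Tendsto.const_mul_atTop (by positivity) ?_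
      exact tendsto_atTop_add_const_right _ _ (hsT.const_mul_atTop (by norm_num))
    have hb2 : Tendsto (fun m => (((3 * Real.pi / 8) * (4 * (s m : ℝ) - 1.051)) ^ 2)⁻¹)
        atTop (𝓝 0) := ((tendsto_pow_atTop two_ne_zero).comp hb).inv_tendsto_atTop
    have hb3 : Tendsto (fun m => 0.130 * (((3 * Real.pi / 8) * (4 * (s m : ℝ) - 1.051)) ^ 2)⁻¹)
        atTop (𝓝 0) := by simpa using tendsto_const_nhds.mul hb2
    refine tendsto_of_tendsto_of_tendsto_of_le_of_le' tendsto_const_nhds hb3 ?_ ?_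
    · filter_upwards [hsN.eventually_ge_atTop 1] with m hm using hσ0 _ hm
    · filter_upwards [hsN.eventually_ge_atTop 1] with m hm using hσ1 _ hm
  -- Q tends to 3π/2
  set Q : ℕ → ℝ := fun m => (3 * Real.pi / 8) * ((4 * (s m : ℝ) - 1) / (m:ℝ) ^ γ₁) with hQdef
  have hQ : Tendsto Q atTop (𝓝 (3 * Real.pi / 2)) := by
    have h := hr.const_mul (3 * Real.pi / 8)
    have h32 : 3 * Real.pi / 8 * 4 = 3 * Real.pi / 2 := by ring
    rwa [h32] at h
  set G : ℕ → ℝ := fun m =>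
    -(a (s m)) / 2 ^ ((1:ℝ)/3) * (m:ℝ) ^ ((1:ℝ)/3) / ((m:ℝ) * (m:ℝ) ^ α) - C₀ with hGdef
  set H : ℕ → ℝ := fun m =>
    (3/20) * (a (s m)) ^ 2 * 2 ^ ((1:ℝ)/3) / ((m:ℝ) ^ ((1:ℝ)/3) * ((m:ℝ) * (m:ℝ) ^ α)) with hHdef
  have hev : ∀ᶠ m : ℕ in atTop, 1 ≤ m ∧ 1 ≤ s m :=
    (eventually_ge_atTop 1).and (hsN.eventually_ge_atTop 1)
  -- G eventually equals a nice closed form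
  have hGeq : ∀ᶠ m : ℕ in atTop,
      G m = Q m ^ ((2:ℝ)/3) * (1 + σ' (s m)) / 2 ^ ((1:ℝ)/3) - C₀ := by
    filter_upwards [hev] with m ⟨hm1, hs1⟩
    have hx0 : (0:ℝ) < (m:ℝ) := by exact_mod_cast hm1
    have hA0 : (0:ℝ) < (3 * Real.pi / 8) * (4 * (s m : ℝ) - 1) := by
      have h0 : (1:ℝ) ≤ (s m : ℝ) := by exact_mod_cast hs1
      have : (3:ℝ) ≤ 4 * (s m : ℝ) - 1 := by linarith
      positivity
    have hy0 : (0:ℝ) < (m:ℝ) ^ γ₁ := Real.rpow_pos_of_pos hx0 _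
    have hQrw : Q m ^ ((2:ℝ)/3)
        = ((3 * Real.pi / 8) * (4 * (s m : ℝ) - 1)) ^ ((2:ℝ)/3) / (m:ℝ) ^ (2 * γ₁ / 3) := by
      have h1 : Q m = ((3 * Real.pi / 8) * (4 * (s m : ℝ) - 1)) / (m:ℝ) ^ γ₁ := by
        rw [hQdef]; ring
      rw [h1, Real.div_rpow hA0.le hy0.le, ← Real.rpow_mul hx0.le,
        show γ₁ * ((2:ℝ)/3) = 2 * γ₁ / 3 from by ring]
    have hxid : (m:ℝ) ^ ((1:ℝ)/3) / ((m:ℝ) * (m:ℝ) ^ α) = ((m:ℝ) ^ (2 * γ₁ / 3))⁻¹ := by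
      rw [show (m:ℝ) * (m:ℝ) ^ α = (m:ℝ) ^ ((1:ℝ) + α) from by
        rw [Real.rpow_add hx0, Real.rpow_one],
        ← Real.rpow_sub hx0, show (1:ℝ)/3 - (1 + α) = -(2 * γ₁ / 3) from by rw [hα]; ring,
        Real.rpow_neg hx0.le]
    have hX0 : (0:ℝ) < (m:ℝ) ^ (2 * γ₁ / 3) := Real.rpow_pos_of_pos hx0 _
    have ht0 : ((2:ℝ)) ^ ((1:ℝ)/3) ≠ 0 := (Real.rpow_pos_of_pos two_pos _).ne'
    rw [hGdef]
    simp only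
    rw [ha _ hs1, hQrw, neg_mul, neg_neg, mul_div_assoc _ ((m:ℝ) ^ ((1:ℝ)/3)), hxid]
    field_simp
  -- H eventually equals a nice closed form
  have hHeq : ∀ᶠ m : ℕ in atTop,
      H m = (3/20) * 2 ^ ((1:ℝ)/3) * Q m ^ ((4:ℝ)/3) * (1 + σ' (s m)) ^ 2
        * (m:ℝ) ^ ((2 * γ₁ - 2)/3) := by
    filter_upwards [hev] with m ⟨hm1, hs1⟩
    have hx0 : (0:ℝ) < (m:ℝ) := by exact_mod_cast hm1
    have hA0 : (0:ℝ) < (3 * Real.pi / 8) * (4 * (s m : ℝ) - 1) := by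
      have h0 : (1:ℝ) ≤ (s m : ℝ) := by exact_mod_cast hs1
      have : (3:ℝ) ≤ 4 * (s m : ℝ) - 1 := by linarith
      positivity
    have hy0 : (0:ℝ) < (m:ℝ) ^ γ₁ := Real.rpow_pos_of_pos hx0 _
    have hQ43 : Q m ^ ((4:ℝ)/3)
        = ((3 * Real.pi / 8) * (4 * (s m : ℝ) - 1)) ^ ((4:ℝ)/3) / (m:ℝ) ^ (4 * γ₁ / 3) := by
      have h1 : Q m = ((3 * Real.pi / 8) * (4 * (s m : ℝ) - 1)) / (m:ℝ) ^ γ₁ := by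
        rw [hQdef]; ring
      rw [h1, Real.div_rpow hA0.le hy0.le, ← Real.rpow_mul hx0.le,
        show γ₁ * ((4:ℝ)/3) = 4 * γ₁ / 3 from by ring]
    have hA43 : (((3 * Real.pi / 8) * (4 * (s m : ℝ) - 1)) ^ ((2:ℝ)/3)) ^ 2
        = ((3 * Real.pi / 8) * (4 * (s m : ℝ) - 1)) ^ ((4:ℝ)/3) := by
      rw [sq, ← Real.rpow_add hA0]; norm_num
    have hden : (m:ℝ) ^ ((1:ℝ)/3) * ((m:ℝ) * (m:ℝ) ^ α)
        = (m:ℝ) ^ ((1:ℝ)/3 + (1 + α)) := by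
      rw [Real.rpow_add hx0, Real.rpow_add hx0, Real.rpow_one]
    have hpow : (m:ℝ) ^ ((2 * γ₁ - 2)/3)
        = (m:ℝ) ^ (4 * γ₁ / 3) / (m:ℝ) ^ ((1:ℝ)/3 + (1 + α)) := by
      rw [eq_div_iff (Real.rpow_pos_of_pos hx0 _).ne', ← Real.rpow_add hx0]
      congr 1
      rw [hα]; ring
    have hD0 : (0:ℝ) < (m:ℝ) ^ ((1:ℝ)/3 + (1 + α)) := Real.rpow_pos_of_pos hx0 _
    have hX0 : (0:ℝ) < (m:ℝ) ^ (4 * γ₁ / 3) := Real.rpow_pos_of_pos hx0 _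
    rw [hHdef]
    simp only
    rw [ha _ hs1, hQ43, hden, hpow, mul_pow, neg_sq, hA43]
    field_simp
  -- limits of G and H
  have hG0 : Tendsto G atTop (𝓝 0) := by
    have hnice : Tendsto (fun m => Q m ^ ((2:ℝ)/3) * (1 + σ' (s m)) / 2 ^ ((1:ℝ)/3) - C₀)
        atTop (𝓝 ((3 * Real.pi / 2) ^ ((2:ℝ)/3) * (1 + 0) / 2 ^ ((1:ℝ)/3) - C₀)) :=
      (((hQ.rpow_const (Or.inr (by norm_num : (0:ℝ) ≤ 2/3))).mul
        (tendsto_const_nhds.add hσlim)).div_const _).sub tendsto_const_nhds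
    have hval : (3 * Real.pi / 2) ^ ((2:ℝ)/3) * (1 + 0) / 2 ^ ((1:ℝ)/3) - C₀ = 0 := by
      rw [hC₀]; ring
    rw [hval] at hnice
    exact Tendsto.congr' (hGeq.mono fun m h => h.symm) hnice
  have hx20 : Tendsto (fun m : ℕ => (m:ℝ) ^ ((2 * γ₁ - 2)/3)) atTop (𝓝 0) := by
    have h := (tendsto_rpow_neg_atTop (by linarith : (0:ℝ) < (2 - 2 * γ₁)/3)).comp
      tendsto_natCast_atTop_atTop
    simpa [Function.comp_def, show -((2 - 2 * γ₁)/3) = (2 * γ₁ - 2)/3 from by ring] using h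
  have hH0 : Tendsto H atTop (𝓝 0) := by
    have h1 : Tendsto (fun m => Q m ^ ((4:ℝ)/3)) atTop (𝓝 ((3 * Real.pi / 2) ^ ((4:ℝ)/3))) :=
      hQ.rpow_const (Or.inr (by norm_num : (0:ℝ) ≤ 4/3))
    have h2 : Tendsto (fun m => (1 + σ' (s m)) ^ 2) atTop (𝓝 ((1 + 0) ^ 2)) :=
      (tendsto_const_nhds.add hσlim).pow 2
    have hnice := ((h1.const_mul ((3:ℝ)/20 * 2 ^ ((1:ℝ)/3))).mul h2).mul hx20
    rw [mul_zero] at hnice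
    exact Tendsto.congr' (hHeq.mono fun m h => h.symm) hnice
  -- sandwich for e m / m^α
  have hfbound : ∀ᶠ m : ℕ in atTop,
      G m ≤ e m / (m:ℝ) ^ α ∧ e m / (m:ℝ) ^ α ≤ G m + H m := by
    filter_upwards [hev] with m ⟨hm1, hs1⟩
    have hx0 : (0:ℝ) < (m:ℝ) := by exact_mod_cast hm1
    have hxα : (0:ℝ) < (m:ℝ) ^ α := Real.rpow_pos_of_pos hx0 _
    have hx13 : (0:ℝ) < (m:ℝ) ^ ((1:ℝ)/3) := Real.rpow_pos_of_pos hx0 _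
    have ht0 : (0:ℝ) < (2:ℝ) ^ ((1:ℝ)/3) := Real.rpow_pos_of_pos two_pos _
    constructor
    · have hkey : e m / (m:ℝ) ^ α - G m
          = (j m (s m) - ((m:ℝ) - a (s m) / 2 ^ ((1:ℝ)/3) * (m:ℝ) ^ ((1:ℝ)/3)))
            / ((m:ℝ) * (m:ℝ) ^ α) := by
        rw [hedef, hGdef]
        simp only
        field_simp
        ring
      have h1 : 0 < e m / (m:ℝ) ^ α - G m := by
        rw [hkey]
        exact div_pos (by linarith [hlow m (s m) hm1 hs1]) (by positivity)
      linarith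
    · have hkey : (G m + H m) - e m / (m:ℝ) ^ α
          = (((m:ℝ) - a (s m) / 2 ^ ((1:ℝ)/3) * (m:ℝ) ^ ((1:ℝ)/3)
              + (3/20) * (a (s m)) ^ 2 * 2 ^ ((1:ℝ)/3) / (m:ℝ) ^ ((1:ℝ)/3)) - j m (s m))
            / ((m:ℝ) * (m:ℝ) ^ α) := by
        rw [hedef, hGdef, hHdef]
        simp only
        field_simp
        ring
      have h1 : 0 < (G m + H m) - e m / (m:ℝ) ^ α := by
        rw [hkey]
        exact div_pos (by linarith [hup m (s m) hm1 hs1]) (by positivity)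
      linarith
  have hGH0 : Tendsto (fun m => G m + H m) atTop (𝓝 0) := by
    simpa using hG0.add hH0
  have hf0 : Tendsto (fun m => e m / (m:ℝ) ^ α) atTop (𝓝 0) :=
    tendsto_of_tendsto_of_tendsto_of_le_of_le' hG0 hGH0
      (hfbound.mono fun m h => h.1) (hfbound.mono fun m h => h.2)
  refine ⟨C₀, hC₀pos, e, ?_, ?_⟩
  · rw [isLittleO_iff_tendsto']
    · exact hf0
    · filter_upwards [eventually_ge_atTop 1] with m hm h0
      exact absurd h0 (Real.rpow_pos_of_pos (by exact_mod_cast hm : (0:ℝ) < (m:ℝ)) _).ne'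
  · filter_upwards [eventually_ge_atTop 1] with m hm
    have hm0 : ((m:ℝ)) ≠ 0 := by positivity
    show j m (s m) = (m:ℝ) * (1 + C₀ * (m:ℝ) ^ α + e m)
    rw [hedef]
    simp only
    field_simp
    ring
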